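/- Let n ≥ 2 and m ≥ 1 be integers. In the graph G_n^m, the sets S_K and S_T have equal group closeness centrality, namely C_c(S_K) = C_c(S_T) = (3n−2)/(2n−1). -/

import Mathlib

open scoped Classical

/-- Distance from a vertex `u` to a set `S`: `d(u,S) = min_{w∈S} d(u,w)`. -/
noncomputable def distToSet {V : Type*} (G : SimpleGraph V) (u : V) (S : Set V) : ℕ :=
  sInf ((fun w => G.dist u w) '' S)

/-- Group closeness centrality `C_c(S) = (Σ_{v∈V\S} d(v,S)) / |V\S|`. -/
noncomputable def closenessCentrality {V : Type*} [Fintype V] (G : SimpleGraph V)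
    (S : Set V) : ℝ :=
  (∑ v ∈ Finset.univ.filter (fun v : V => v ∉ S), (distToSet G v S : ℝ)) /
    ((Finset.univ.filter (fun v : V => v ∉ S)).card : ℝ)

/-- Vertices of the graph `G_n^m`: a central vertex `v` (the `Sum.inl` summand),
the vertices `(i,j)` of the cliques `K_n^i` (the first `Sum.inr ∘ Sum.inl` summand,
with `j = 0` the designated vertex `k_n^i`), and the vertices `(i,j)` of the stars
`T_n^i` (the second summand, with `j = 0` the root `t_n^i`). -/
abbrev GnmVertex (n m : ℕ) : Type := Unit ⊕ (Fin m × Fin n) ⊕ (Fin m × Fin n)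

/-- Generating relation for `G_n^m`: `v` is joined to each `k_n^i` and each `t_n^i`;
each clique copy `K_n^i` is complete; in each star `T_n^i` the root `t_n^i` is joined
to every other vertex of `T_n^i`. -/
def gnmRel (n m : ℕ) : GnmVertex n m → GnmVertex n m → Prop
  | Sum.inl _, Sum.inr (Sum.inl (_, j)) => (j : ℕ) = 0
  | Sum.inl _, Sum.inr (Sum.inr (_, j)) => (j : ℕ) = 0
  | Sum.inr (Sum.inl (i, _)), Sum.inr (Sum.inl (i', _)) => i = i'
  | Sum.inr (Sum.inr (i, j)), Sum.inr (Sum.inr (i', j')) =>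
      i = i' ∧ ((j : ℕ) = 0 ∨ (j' : ℕ) = 0)
  | _, _ => False

/-- The graph `G_n^m`: a central vertex `v`, `m` disjoint copies of the complete graph
`K_n` each joined to `v` by a single edge through its designated vertex `k_n^i`, and
`m` disjoint stars (trees of height 1) on `n` vertices whose roots `t_n^i` are adjacent
to `v`. -/
def Gnm (n m : ℕ) : SimpleGraph (GnmVertex n m) := SimpleGraph.fromRel (gnmRel n m)

/-- The set `S_K = {v, k_n^1, …, k_n^m}`. -/
def setSK (n m : ℕ) : Set (GnmVertex n m) :=
  {x | x = Sum.inl () ∨ ∃ (i : Fin m) (j : Fin n), (j : ℕ) = 0 ∧ x = Sum.inr (Sum.inl (i, j))}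

/-- The set `S_T = {v, t_n^1, …, t_n^m}`. -/
def setST (n m : ℕ) : Set (GnmVertex n m) :=
  {x | x = Sum.inl () ∨ ∃ (i : Fin m) (j : Fin n), (j : ℕ) = 0 ∧ x = Sum.inr (Sum.inr (i, j))}

section Aux

variable {V : Type*}

lemma distToSet_eq_one {G : SimpleGraph V} (hG : G.Preconnected) {u : V} {S : Set V}
    (hu : u ∉ S) {w : V} (hw : w ∈ S) (h : G.Adj u w) : distToSet G u S = 1 := by
  have hne : ((fun w => G.dist u w) '' S).Nonempty := ⟨_, ⟨w, hw, rfl⟩⟩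
  have h1 : (1:ℕ) ∈ (fun w => G.dist u w) '' S :=
    ⟨w, hw, SimpleGraph.dist_eq_one_iff_adj.mpr h⟩
  have hle : sInf ((fun w => G.dist u w) '' S) ≤ 1 := Nat.sInf_le h1
  have hmem := Nat.sInf_mem hne
  obtain ⟨w', hw', hdw'⟩ := hmem
  have hne0 : sInf ((fun w => G.dist u w) '' S) ≠ 0 := by
    intro h0
    rw [h0] at hdw'
    have : u = w' := ((hG u w').dist_eq_zero_iff).mp (by exact hdw')
    exact hu (this ▸ hw')
  unfold distToSet
  omega

lemma distToSet_eq_two {G : SimpleGraph V} (hG : G.Preconnected) {u : V} {S : Set V}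
    (hu : u ∉ S) {w : V} (hw : w ∈ S) (h2 : G.dist u w = 2)
    (hnadj : ∀ w' ∈ S, ¬ G.Adj u w') : distToSet G u S = 2 := by
  have hne : ((fun w => G.dist u w) '' S).Nonempty := ⟨_, ⟨w, hw, rfl⟩⟩
  have h1 : (2:ℕ) ∈ (fun w => G.dist u w) '' S := ⟨w, hw, h2⟩
  have hle : sInf ((fun w => G.dist u w) '' S) ≤ 2 := Nat.sInf_le h1
  obtain ⟨w', hw', hdw'⟩ := Nat.sInf_mem hne
  have hne0 : sInf ((fun w => G.dist u w) '' S) ≠ 0 := by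
    intro h0
    rw [h0] at hdw'
    have : u = w' := ((hG u w').dist_eq_zero_iff).mp (by exact hdw')
    exact hu (this ▸ hw')
  have hne1 : sInf ((fun w => G.dist u w) '' S) ≠ 1 := by
    intro h0
    rw [h0] at hdw'
    exact hnadj w' hw' (SimpleGraph.dist_eq_one_iff_adj.mp (by exact hdw'))
  unfold distToSet
  omega

section graph
variable {n m : ℕ}

lemma adj_iff (a b : GnmVertex n m) :
    (Gnm n m).Adj a b ↔ a ≠ b ∧ (gnmRel n m a b ∨ gnmRel n m b a) := by
  simp [Gnm, SimpleGraph.fromRel_adj]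

lemma adj_v_k (i : Fin m) (j : Fin n) (hj : (j:ℕ) = 0) :
    (Gnm n m).Adj (Sum.inl ()) (Sum.inr (Sum.inl (i, j))) := by
  rw [adj_iff]
  exact ⟨by simp, Or.inl hj⟩

lemma adj_v_t (i : Fin m) (j : Fin n) (hj : (j:ℕ) = 0) :
    (Gnm n m).Adj (Sum.inl ()) (Sum.inr (Sum.inr (i, j))) := by
  rw [adj_iff]
  exact ⟨by simp, Or.inl hj⟩

lemma adj_k_k (i : Fin m) (j j' : Fin n) (hj : j ≠ j') :
    (Gnm n m).Adj (Sum.inr (Sum.inl (i, j))) (Sum.inr (Sum.inl (i, j'))) := by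
  rw [adj_iff]
  exact ⟨by simp [hj], Or.inl rfl⟩

lemma adj_t_t (i : Fin m) (j j' : Fin n) (hj : j ≠ j') (h0 : (j:ℕ) = 0 ∨ (j':ℕ) = 0) :
    (Gnm n m).Adj (Sum.inr (Sum.inr (i, j))) (Sum.inr (Sum.inr (i, j'))) := by
  rw [adj_iff]
  exact ⟨by simp [hj], Or.inl ⟨rfl, h0⟩⟩

lemma not_adj_k_v (i : Fin m) (j : Fin n) (hj : (j:ℕ) ≠ 0) :
    ¬ (Gnm n m).Adj (Sum.inr (Sum.inl (i, j))) (Sum.inl ()) := by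
  rw [adj_iff]
  rintro ⟨-, h | h⟩ <;> simp [gnmRel] at h <;> exact hj h

lemma not_adj_t_v (i : Fin m) (j : Fin n) (hj : (j:ℕ) ≠ 0) :
    ¬ (Gnm n m).Adj (Sum.inr (Sum.inr (i, j))) (Sum.inl ()) := by
  rw [adj_iff]
  rintro ⟨-, h | h⟩ <;> simp [gnmRel] at h <;> exact hj h

lemma not_adj_k_t (i i' : Fin m) (j j' : Fin n) :
    ¬ (Gnm n m).Adj (Sum.inr (Sum.inl (i, j))) (Sum.inr (Sum.inr (i', j'))) := by
  rw [adj_iff]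
  rintro ⟨-, h | h⟩ <;> simp [gnmRel] at h

lemma gnm_connected (hn : 1 ≤ n) : (Gnm n m).Connected := by
  haveI : NeZero n := ⟨by omega⟩
  have key : ∀ x : GnmVertex n m, (Gnm n m).Reachable (Sum.inl ()) x := by
    rintro (⟨⟩ | ⟨⟨i, j⟩ | ⟨i, j⟩⟩)
    · exact SimpleGraph.Reachable.refl _
    · by_cases hj : (j:ℕ) = 0
      · exact (adj_v_k i j hj).reachable
      · exact (adj_v_k i 0 (by simp)).reachable.trans
          (adj_k_k i 0 j (fun h => hj (by simp [← h]))).reachable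
    · by_cases hj : (j:ℕ) = 0
      · exact (adj_v_t i j hj).reachable
      · exact (adj_v_t i 0 (by simp)).reachable.trans
          (adj_t_t i 0 j (fun h => hj (by simp [← h])) (Or.inl (by simp))).reachable
  exact SimpleGraph.Connected.mk (fun x y => (key x).symm.trans (key y))

lemma dist_eq_two' {W : Type*} {G : SimpleGraph W} (hc : G.Connected) {u w v : W}
    (h1 : G.Adj u w) (h2 : G.Adj w v) (h3 : ¬ G.Adj u v) (h4 : u ≠ v) : G.dist u v = 2 := by
  have t : G.dist u v ≤ G.dist u w + G.dist w v := hc.dist_triangle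
  rw [SimpleGraph.dist_eq_one_iff_adj.mpr h1, SimpleGraph.dist_eq_one_iff_adj.mpr h2] at t
  have h0 : G.dist u v ≠ 0 := fun h => h4 (hc.dist_eq_zero_iff.mp h)
  have h1' : G.dist u v ≠ 1 := fun h => h3 (SimpleGraph.dist_eq_one_iff_adj.mp h)
  omega

/- membership -/
lemma mem_SK_v : (Sum.inl () : GnmVertex n m) ∈ setSK n m := Or.inl rfl
lemma mem_ST_v : (Sum.inl () : GnmVertex n m) ∈ setST n m := Or.inl rfl

lemma mem_SK_k (i : Fin m) (j : Fin n) :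
    (Sum.inr (Sum.inl (i, j)) : GnmVertex n m) ∈ setSK n m ↔ (j:ℕ) = 0 := by
  simp only [setSK, Set.mem_setOf_eq]
  constructor
  · rintro (h | ⟨i', j', hj', h⟩)
    · simp at h
    · obtain ⟨rfl, rfl⟩ : i' = i ∧ j' = j := by simpa [Prod.ext_iff, eq_comm] using h
      exact hj'
  · intro h; exact Or.inr ⟨i, j, h, rfl⟩

lemma mem_ST_t (i : Fin m) (j : Fin n) :
    (Sum.inr (Sum.inr (i, j)) : GnmVertex n m) ∈ setST n m ↔ (j:ℕ) = 0 := by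
  simp only [setST, Set.mem_setOf_eq]
  constructor
  · rintro (h | ⟨i', j', hj', h⟩)
    · simp at h
    · obtain ⟨rfl, rfl⟩ : i' = i ∧ j' = j := by simpa [Prod.ext_iff, eq_comm] using h
      exact hj'
  · intro h; exact Or.inr ⟨i, j, h, rfl⟩

lemma not_mem_SK_t (i : Fin m) (j : Fin n) :
    (Sum.inr (Sum.inr (i, j)) : GnmVertex n m) ∉ setSK n m := by
  rintro (h | ⟨i', j', hj', h⟩) <;> simp at h

lemma not_mem_ST_k (i : Fin m) (j : Fin n) :
    (Sum.inr (Sum.inl (i, j)) : GnmVertex n m) ∉ setST n m := by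
  rintro (h | ⟨i', j', hj', h⟩) <;> simp at h

end graph

section dists
variable {n m : ℕ} (hn : 1 ≤ n)
include hn

lemma dSK_k (i : Fin m) (j : Fin n) (hj : (j:ℕ) ≠ 0) :
    distToSet (Gnm n m) (Sum.inr (Sum.inl (i, j))) (setSK n m) = 1 := by
  haveI : NeZero n := ⟨by omega⟩
  refine distToSet_eq_one (gnm_connected hn).1 (by simp [mem_SK_k, hj])
    ((mem_SK_k i (0:Fin n)).mpr (by simp)) ?_
  exact adj_k_k i j 0 (fun h => hj (by simp [h]))

lemma dSK_t0 (i : Fin m) (j : Fin n) (hj : (j:ℕ) = 0) :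
    distToSet (Gnm n m) (Sum.inr (Sum.inr (i, j))) (setSK n m) = 1 :=
  distToSet_eq_one (gnm_connected hn).1 (not_mem_SK_t i j) mem_SK_v (adj_v_t i j hj).symm

lemma dSK_t (i : Fin m) (j : Fin n) (hj : (j:ℕ) ≠ 0) :
    distToSet (Gnm n m) (Sum.inr (Sum.inr (i, j))) (setSK n m) = 2 := by
  haveI : NeZero n := ⟨by omega⟩
  refine distToSet_eq_two (gnm_connected hn).1 (not_mem_SK_t i j) mem_SK_v ?_ ?_
  · refine dist_eq_two' (gnm_connected hn)
      (adj_t_t i j 0 (fun h => hj (by simp [h])) (Or.inr (by simp)))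
      (adj_v_t i 0 (by simp)).symm (not_adj_t_v i j hj) (by simp)
  · rintro w' (rfl | ⟨i', j', hj', rfl⟩)
    · exact not_adj_t_v i j hj
    · exact fun h => not_adj_k_t i' i j' j h.symm

lemma dST_k0 (i : Fin m) (j : Fin n) (hj : (j:ℕ) = 0) :
    distToSet (Gnm n m) (Sum.inr (Sum.inl (i, j))) (setST n m) = 1 :=
  distToSet_eq_one (gnm_connected hn).1 (not_mem_ST_k i j) mem_ST_v (adj_v_k i j hj).symm

lemma dST_k (i : Fin m) (j : Fin n) (hj : (j:ℕ) ≠ 0) :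
    distToSet (Gnm n m) (Sum.inr (Sum.inl (i, j))) (setST n m) = 2 := by
  haveI : NeZero n := ⟨by omega⟩
  refine distToSet_eq_two (gnm_connected hn).1 (not_mem_ST_k i j) mem_ST_v ?_ ?_
  · refine dist_eq_two' (gnm_connected hn)
      (adj_k_k i j 0 (fun h => hj (by simp [h])))
      (adj_v_k i 0 (by simp)).symm (not_adj_k_v i j hj) (by simp)
  · rintro w' (rfl | ⟨i', j', hj', rfl⟩)
    · exact not_adj_k_v i j hj
    · exact not_adj_k_t i i' j j'

lemma dST_t (i : Fin m) (j : Fin n) (hj : (j:ℕ) ≠ 0) :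
    distToSet (Gnm n m) (Sum.inr (Sum.inr (i, j))) (setST n m) = 1 := by
  haveI : NeZero n := ⟨by omega⟩
  refine distToSet_eq_one (gnm_connected hn).1 (by simp [mem_ST_t, hj])
    ((mem_ST_t i (0:Fin n)).mpr (by simp)) ?_
  exact adj_t_t i j 0 (fun h => hj (by simp [h])) (Or.inr (by simp))

end dists

lemma sum_fin_iteR (n : ℕ) [NeZero n] (a b : ℝ) :
    ∑ j : Fin n, (if (j:ℕ) = 0 then a else b) = a + ((n-1 : ℕ) : ℝ) * b := by
  have h1 : Finset.univ.filter (fun j : Fin n => (j:ℕ) = 0) = {0} := by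
    ext j; simp
  have h2 : Finset.univ.filter (fun j : Fin n => ¬ (j:ℕ) = 0) = Finset.univ.erase 0 := by
    ext j; simp
  rw [Finset.sum_ite, Finset.sum_const, Finset.sum_const, h1, h2,
    Finset.card_erase_of_mem (Finset.mem_univ _)]
  simp [nsmul_eq_mul, mul_comm]

lemma sum_fin_iteN (n : ℕ) [NeZero n] (a b : ℕ) :
    ∑ j : Fin n, (if (j:ℕ) = 0 then a else b) = a + (n-1) * b := by
  have h1 : Finset.univ.filter (fun j : Fin n => (j:ℕ) = 0) = {0} := by
    ext j; simp
  have h2 : Finset.univ.filter (fun j : Fin n => ¬ (j:ℕ) = 0) = Finset.univ.erase 0 := by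
    ext j; simp
  rw [Finset.sum_ite, Finset.sum_const, Finset.sum_const, h1, h2,
    Finset.card_erase_of_mem (Finset.mem_univ _)]
  simp [mul_comm]

end Aux

/-- For integers `n ≥ 2` and `m ≥ 1`, in the graph `G_n^m` the sets `S_K`
and `S_T` have equal group closeness centrality, namely `(3n−2)/(2n−1)`. -/
theorem closenessCentrality_SK_eq_ST (n m : ℕ) (hn : 2 ≤ n) (hm : 1 ≤ m) :
    closenessCentrality (Gnm n m) (setSK n m) = closenessCentrality (Gnm n m) (setST n m) ∧
      closenessCentrality (Gnm n m) (setSK n m) = (3 * (n : ℝ) - 2) / (2 * (n : ℝ) - 1) := by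
  haveI : NeZero n := ⟨by omega⟩
  have hn1 : 1 ≤ n := by omega
  -- pointwise values, S_K
  have e0K : ∀ x : Unit, (if (Sum.inl x : GnmVertex n m) ∉ setSK n m then
      ((distToSet (Gnm n m) (Sum.inl x) (setSK n m) : ℕ) : ℝ) else 0) = 0 := by
    intro x; cases x; simp [mem_SK_v]
  have e1K : ∀ (i : Fin m) (j : Fin n),
      (if (Sum.inr (Sum.inl (i, j)) : GnmVertex n m) ∉ setSK n m then
        ((distToSet (Gnm n m) (Sum.inr (Sum.inl (i, j))) (setSK n m) : ℕ) : ℝ) else 0)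
      = (if (j : ℕ) = 0 then (0:ℝ) else 1) := by
    intro i j; by_cases hj : (j : ℕ) = 0
    · simp [mem_SK_k, hj]
    · simp [mem_SK_k, hj, dSK_k hn1 i j hj]
  have e2K : ∀ (i : Fin m) (j : Fin n),
      (if (Sum.inr (Sum.inr (i, j)) : GnmVertex n m) ∉ setSK n m then
        ((distToSet (Gnm n m) (Sum.inr (Sum.inr (i, j))) (setSK n m) : ℕ) : ℝ) else 0)
      = (if (j : ℕ) = 0 then (1:ℝ) else 2) := by
    intro i j; by_cases hj : (j : ℕ) = 0
    · simp [not_mem_SK_t, hj, dSK_t0 hn1 i j hj]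
    · simp [not_mem_SK_t, hj, dSK_t hn1 i j hj]
  -- pointwise values, S_T
  have e0T : ∀ x : Unit, (if (Sum.inl x : GnmVertex n m) ∉ setST n m then
      ((distToSet (Gnm n m) (Sum.inl x) (setST n m) : ℕ) : ℝ) else 0) = 0 := by
    intro x; cases x; simp [mem_ST_v]
  have e1T : ∀ (i : Fin m) (j : Fin n),
      (if (Sum.inr (Sum.inl (i, j)) : GnmVertex n m) ∉ setST n m then
        ((distToSet (Gnm n m) (Sum.inr (Sum.inl (i, j))) (setST n m) : ℕ) : ℝ) else 0)
      = (if (j : ℕ) = 0 then (1:ℝ) else 2) := by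
    intro i j; by_cases hj : (j : ℕ) = 0
    · simp [not_mem_ST_k, hj, dST_k0 hn1 i j hj]
    · simp [not_mem_ST_k, hj, dST_k hn1 i j hj]
  have e2T : ∀ (i : Fin m) (j : Fin n),
      (if (Sum.inr (Sum.inr (i, j)) : GnmVertex n m) ∉ setST n m then
        ((distToSet (Gnm n m) (Sum.inr (Sum.inr (i, j))) (setST n m) : ℕ) : ℝ) else 0)
      = (if (j : ℕ) = 0 then (0:ℝ) else 1) := by
    intro i j; by_cases hj : (j : ℕ) = 0
    · simp [mem_ST_t, hj]
    · simp [mem_ST_t, hj, dST_t hn1 i j hj]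
  -- sums
  have hsK : ∑ v ∈ Finset.univ.filter (fun v : GnmVertex n m => v ∉ setSK n m),
      ((distToSet (Gnm n m) v (setSK n m) : ℕ) : ℝ)
      = m * ((0:ℝ) + ((n-1:ℕ):ℝ) * 1) + m * ((1:ℝ) + ((n-1:ℕ):ℝ) * 2) := by
    rw [Finset.sum_filter, Fintype.sum_sum_type, Fintype.sum_sum_type]
    simp only [Fintype.sum_prod_type]
    simp_rw [e0K, e1K, e2K, sum_fin_iteR]
    simp [mul_comm]
    ring
  have hsT : ∑ v ∈ Finset.univ.filter (fun v : GnmVertex n m => v ∉ setST n m),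
      ((distToSet (Gnm n m) v (setST n m) : ℕ) : ℝ)
      = m * ((1:ℝ) + ((n-1:ℕ):ℝ) * 2) + m * ((0:ℝ) + ((n-1:ℕ):ℝ) * 1) := by
    rw [Finset.sum_filter, Fintype.sum_sum_type, Fintype.sum_sum_type]
    simp only [Fintype.sum_prod_type]
    simp_rw [e0T, e1T, e2T, sum_fin_iteR]
    simp [mul_comm]
    ring
  -- cards
  have c1K : ∀ (i : Fin m) (j : Fin n),
      (if (Sum.inr (Sum.inl (i, j)) : GnmVertex n m) ∉ setSK n m then 1 else 0)
      = (if (j : ℕ) = 0 then 0 else 1) := by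
    intro i j; by_cases hj : (j : ℕ) = 0 <;> simp [mem_SK_k, hj]
  have c2K : ∀ (i : Fin m) (j : Fin n),
      (if (Sum.inr (Sum.inr (i, j)) : GnmVertex n m) ∉ setSK n m then 1 else 0)
      = (if (j : ℕ) = 0 then 1 else 1) := by
    intro i j; by_cases hj : (j : ℕ) = 0 <;> simp [not_mem_SK_t]
  have c1T : ∀ (i : Fin m) (j : Fin n),
      (if (Sum.inr (Sum.inl (i, j)) : GnmVertex n m) ∉ setST n m then 1 else 0)
      = (if (j : ℕ) = 0 then 1 else 1) := by
    intro i j; by_cases hj : (j : ℕ) = 0 <;> simp [not_mem_ST_k]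
  have c2T : ∀ (i : Fin m) (j : Fin n),
      (if (Sum.inr (Sum.inr (i, j)) : GnmVertex n m) ∉ setST n m then 1 else 0)
      = (if (j : ℕ) = 0 then 0 else 1) := by
    intro i j; by_cases hj : (j : ℕ) = 0 <;> simp [mem_ST_t, hj]
  have hcK : (Finset.univ.filter (fun v : GnmVertex n m => v ∉ setSK n m)).card
      = m * (0 + (n-1) * 1) + m * (1 + (n-1) * 1) := by
    rw [Finset.card_filter, Fintype.sum_sum_type, Fintype.sum_sum_type]
    simp only [Fintype.sum_prod_type]
    simp_rw [c1K, c2K, sum_fin_iteN]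
    simp [mem_SK_v, mul_comm]
  have hcT : (Finset.univ.filter (fun v : GnmVertex n m => v ∉ setST n m)).card
      = m * (1 + (n-1) * 1) + m * (0 + (n-1) * 1) := by
    rw [Finset.card_filter, Fintype.sum_sum_type, Fintype.sum_sum_type]
    simp only [Fintype.sum_prod_type]
    simp_rw [c1T, c2T, sum_fin_iteN]
    simp [mem_ST_v, mul_comm]
  -- final arithmetic
  have hm0 : (m:ℝ) ≠ 0 := Nat.cast_ne_zero.mpr (by omega)
  have hc : ((n-1:ℕ):ℝ) = (n:ℝ) - 1 := by
    rw [Nat.cast_sub hn1]; norm_num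
  have hnumK : (m:ℝ) * ((0:ℝ) + ((n-1:ℕ):ℝ) * 1) + m * ((1:ℝ) + ((n-1:ℕ):ℝ) * 2)
      = (m:ℝ) * (3*(n:ℝ) - 2) := by rw [hc]; ring
  have hnumT : (m:ℝ) * ((1:ℝ) + ((n-1:ℕ):ℝ) * 2) + m * ((0:ℝ) + ((n-1:ℕ):ℝ) * 1)
      = (m:ℝ) * (3*(n:ℝ) - 2) := by rw [hc]; ring
  have hdenK : ((m * (0 + (n-1) * 1) + m * (1 + (n-1) * 1) : ℕ) : ℝ)
      = (m:ℝ) * (2*(n:ℝ) - 1) := by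
    push_cast [Nat.cast_sub hn1]; ring
  have hdenT : ((m * (1 + (n-1) * 1) + m * (0 + (n-1) * 1) : ℕ) : ℝ)
      = (m:ℝ) * (2*(n:ℝ) - 1) := by
    push_cast [Nat.cast_sub hn1]; ring
  have hCK : closenessCentrality (Gnm n m) (setSK n m)
      = ((m:ℝ) * (3*(n:ℝ) - 2)) / ((m:ℝ) * (2*(n:ℝ) - 1)) := by
    unfold closenessCentrality
    rw [hsK, hcK, hdenK, hnumK]
  have hCT : closenessCentrality (Gnm n m) (setST n m)
      = ((m:ℝ) * (3*(n:ℝ) - 2)) / ((m:ℝ) * (2*(n:ℝ) - 1)) := by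
    unfold closenessCentrality
    rw [hsT, hcT, hdenT, hnumT]
  refine ⟨by rw [hCK, hCT], ?_⟩
  rw [hCK, mul_div_mul_left _ _ hm0]
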